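/- Let D > 0 and let G : ℝ³ → ℝ be C¹ with G(t,x,y) = 0 whenever |y| ≥ D. Then every maximal solution θ of the second-order ODE θ″(t) = G(t, θ(t), θ′(t)) with initial conditions θ(t₀) = x₀, θ′(t₀) = y₀ is defined on all of ℝ, and satisfies |θ′(t)| ≤ max(D, |y₀|) for all t ∈ ℝ. -/

import Mathlib

open Set Metric Filter Topology NNReal

/-- Lipschitz bound for a `C¹` function on a compact convex set. -/
lemma aux_exists_lipschitzOnWith_of_contDiff {E F : Type*} [NormedAddCommGroup E]
    [NormedSpace ℝ E] [NormedAddCommGroup F] [NormedSpace ℝ F]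
    {f : E → F} (hf : ContDiff ℝ 1 f) {s : Set E} (hconv : Convex ℝ s) (hcomp : IsCompact s) :
    ∃ K : ℝ≥0, LipschitzOnWith K f s := by
  obtain ⟨C, hC⟩ := hcomp.exists_bound_of_continuousOn
    ((hf.continuous_fderiv one_ne_zero).continuousOn : ContinuousOn (fderiv ℝ f) s)
  refine ⟨⟨max C 0, le_max_right _ _⟩, hconv.lipschitzOnWith_of_nnnorm_hasFDerivWithin_le
    (f' := fun x => fderiv ℝ f x)
    (fun x _ => (hf.differentiable one_ne_zero x).hasFDerivAt.hasFDerivWithinAt) fun x hx => ?_⟩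
  refine NNReal.coe_le_coe.mp ?_
  exact (hC x hx).trans (le_max_left _ _)

/-- Velocity bound, rightward: if `Y' = W` on `Icc a b`, `W` vanishes whenever `D ≤ |Y|`,
`D ≤ M` and `|Y a| ≤ M`, then `|Y| ≤ M` on `Icc a b`. -/
lemma aux_vel_bound_right {D M a b : ℝ} (hDM : D ≤ M) {Y W : ℝ → ℝ}
    (hY' : ∀ t ∈ Icc a b, HasDerivWithinAt Y (W t) (Icc a b) t)
    (hvan : ∀ t ∈ Icc a b, D ≤ |Y t| → W t = 0)
    (ha : |Y a| ≤ M) : ∀ t ∈ Icc a b, |Y t| ≤ M := by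
  have hcont : ContinuousOn Y (Icc a b) := fun s hs => (hY' s hs).continuousWithinAt
  intro t1 ht1
  by_contra hgt
  push_neg at hgt
  have hat1 : a ≤ t1 := ht1.1
  set S : Set ℝ := {s | s ∈ Icc a t1 ∧ |Y s| ≤ M} with hS
  have haS : a ∈ S := ⟨⟨le_refl a, hat1⟩, ha⟩
  have hSsub : S ⊆ Icc a t1 := fun s hs => hs.1
  have hSb : BddAbove S := (bddAbove_Icc).mono hSsub
  have hScl : IsClosed S := by
    have : S = Icc a t1 ∩ (fun s => |Y s|) ⁻¹' (Iic M) := by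
      ext s; simp [hS, Set.mem_inter_iff, and_comm]
    rw [this]
    exact ContinuousOn.preimage_isClosed_of_isClosed
      ((hcont.mono (Icc_subset_Icc_right ht1.2)).abs) isClosed_Icc isClosed_Iic
  set c := sSup S with hc
  have hcS : c ∈ S := hScl.csSup_mem ⟨a, haS⟩ hSb
  have hct1 : c ≤ t1 := (hSsub hcS).2
  have hclt : c < t1 := lt_of_le_of_ne hct1 (fun h => absurd hcS.2 (by rw [h]; exact not_le.mpr hgt))
  have hIoc : ∀ s ∈ Ioc c t1, M < |Y s| := by
    intro s hs
    by_contra h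
    push_neg at h
    have hsS : s ∈ S := ⟨⟨(hSsub hcS).1.trans hs.1.le, hs.2⟩, h⟩
    exact absurd (le_csSup hSb hsS) (not_le.mpr hs.1)
  have hcIcc : c ∈ Icc a b := ⟨(hSsub hcS).1, hct1.trans ht1.2⟩
  -- |Y c| = M via limit from the right
  have hYcM : |Y c| = M := by
    refine le_antisymm hcS.2 ?_
    have hne : (𝓝[Ioc c t1] c).NeBot := by
      rw [← mem_closure_iff_nhdsWithin_neBot, closure_Ioc hclt.ne]
      exact ⟨le_refl c, hclt.le⟩
    have htend : Tendsto (fun s => |Y s|) (𝓝[Ioc c t1] c) (𝓝 |Y c|) := by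
      have : ContinuousWithinAt (fun s => |Y s|) (Icc a b) c := (hcont.abs) c hcIcc
      exact this.mono (fun s hs => ⟨hcIcc.1.trans hs.1.le, hs.2.trans ht1.2⟩)
    exact ge_of_tendsto htend (eventually_nhdsWithin_of_forall fun s hs => (hIoc s hs).le)
  -- W vanishes on Icc c t1, hence Y is constant there
  have hconst : ∀ x ∈ Icc c t1, Y x = Y c := by
    apply constant_of_has_deriv_right_zero
      (hcont.mono fun s hs => ⟨hcIcc.1.trans hs.1, hs.2.trans ht1.2⟩)
    intro x hx
    have hxIcc : x ∈ Icc a b := ⟨hcIcc.1.trans hx.1, hx.2.le.trans ht1.2⟩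
    have hW0 : W x = 0 := by
      apply hvan x hxIcc
      rcases eq_or_lt_of_le hx.1 with h | h
      · rw [← h]; exact hYcM ▸ hDM
      · exact hDM.trans (hIoc x ⟨h, hx.2.le⟩).le
    have := hY' x hxIcc
    rw [hW0] at this
    refine this.mono_of_mem_nhdsWithin ?_
    rw [mem_nhdsWithin]
    refine ⟨Iio b, isOpen_Iio, lt_of_lt_of_le hx.2 ht1.2, ?_⟩
    rintro s ⟨hs1, hs2⟩
    exact ⟨hxIcc.1.trans hs2, hs1.le⟩
  have := hconst t1 ⟨hclt.le, le_refl t1⟩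
  rw [this] at hgt
  exact absurd hYcM (ne_of_gt hgt)

/-- Velocity bound, leftward. -/
lemma aux_vel_bound_left {D M a b : ℝ} (hDM : D ≤ M) {Y W : ℝ → ℝ}
    (hY' : ∀ t ∈ Icc a b, HasDerivWithinAt Y (W t) (Icc a b) t)
    (hvan : ∀ t ∈ Icc a b, D ≤ |Y t| → W t = 0)
    (hb : |Y b| ≤ M) : ∀ t ∈ Icc a b, |Y t| ≤ M := by
  have hmaps : MapsTo Neg.neg (Icc (-b) (-a)) (Icc a b) := fun s hs =>
    ⟨le_neg.mp hs.2, neg_le.mp hs.1⟩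
  have key : ∀ s ∈ Icc (-b) (-a), |(Y ∘ Neg.neg) s| ≤ M := by
    apply aux_vel_bound_right (W := fun s => W (-s) * (-1)) hDM
    · intro s hs
      exact HasDerivWithinAt.comp s (hY' (-s) (hmaps hs))
        ((hasDerivAt_neg s).hasDerivWithinAt) hmaps
    · intro s hs hD
      rw [hvan (-s) (hmaps hs) hD, zero_mul]
    · simpa using hb
  intro t ht
  simpa using key (-t) ⟨neg_le_neg ht.2, neg_le_neg ht.1⟩

/-- Uniqueness for `f' t = F (t, f t)` on a compact interval, for `C¹` field `F`. -/
lemma aux_uniq {F : ℝ × ℝ × ℝ → ℝ × ℝ} (hF : ContDiff ℝ 1 F)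
    {a b s₀ : ℝ} (hs₀ : s₀ ∈ Ioo a b) {f g : ℝ → ℝ × ℝ}
    (hfc : ContinuousOn f (Icc a b)) (hf : ∀ t ∈ Ioo a b, HasDerivAt f (F (t, f t)) t)
    (hgc : ContinuousOn g (Icc a b)) (hg : ∀ t ∈ Ioo a b, HasDerivAt g (F (t, g t)) t)
    (heq : f s₀ = g s₀) : EqOn f g (Icc a b) := by
  have hab : a ≤ b := (hs₀.1.trans hs₀.2).le
  obtain ⟨Cf, hCf⟩ := (isCompact_Icc).exists_bound_of_continuousOn hfc
  obtain ⟨Cg, hCg⟩ := (isCompact_Icc).exists_bound_of_continuousOn hgc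
  set R := max (max Cf Cg) 0 with hR
  set s : Set (ℝ × ℝ) := closedBall 0 R with hs
  have hsetc : IsCompact ((Icc a b) ×ˢ s) := isCompact_Icc.prod (isCompact_closedBall _ _)
  have hsetv : Convex ℝ ((Icc a b) ×ˢ s) := (convex_Icc _ _).prod (convex_closedBall _ _)
  obtain ⟨K, hK⟩ := aux_exists_lipschitzOnWith_of_contDiff hF hsetv hsetc
  set π : ℝ → ℝ := fun t => max a (min t b) with hπdef
  have hπ : ∀ t, π t ∈ Icc a b := fun t => ⟨le_max_left _ _, max_le hab (min_le_right _ _)⟩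
  have hπeq : ∀ t ∈ Icc a b, π t = t := by
    intro t ht
    simp only [hπdef]
    rw [min_eq_left ht.2, max_eq_right ht.1]
  set v : ℝ → (ℝ × ℝ) → (ℝ × ℝ) := fun t p => F (π t, p) with hv'
  have hv : ∀ t, LipschitzOnWith K (v t) s := by
    intro t p hp q hq
    have h1 : ((π t, p) : ℝ × ℝ × ℝ) ∈ (Icc a b) ×ˢ s := ⟨hπ t, hp⟩
    have h2 : ((π t, q) : ℝ × ℝ × ℝ) ∈ (Icc a b) ×ˢ s := ⟨hπ t, hq⟩
    refine (hK h1 h2).trans ?_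
    have : edist ((π t, p) : ℝ × ℝ × ℝ) (π t, q) = edist p q := by
      rw [Prod.edist_eq, edist_self]
      exact max_eq_right zero_le
    rw [this]
  have hmemf : ∀ t ∈ Icc a b, f t ∈ s := fun t ht => by
    rw [hs, mem_closedBall_zero_iff]
    exact (hCf t ht).trans ((le_max_left _ _).trans (le_max_left _ _))
  have hmemg : ∀ t ∈ Icc a b, g t ∈ s := fun t ht => by
    rw [hs, mem_closedBall_zero_iff]
    exact (hCg t ht).trans ((le_max_right _ _).trans (le_max_left _ _))
  have hIoo : Ioo a b ⊆ Icc a b := Ioo_subset_Icc_self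
  exact ODE_solution_unique_of_mem_Icc (v := v) (s := fun _ => s) (fun t _ => hv t) hs₀ hfc
    (fun t ht => by rw [hv']; simp only [hπeq t (hIoo ht)]; exact hf t ht)
    (fun t ht => hmemf t (hIoo ht)) hgc
    (fun t ht => by rw [hv']; simp only [hπeq t (hIoo ht)]; exact hg t ht)
    (fun t ht => hmemg t (hIoo ht)) heq

/-- Existence of a solution of the system on a compact interval, with velocity bound. -/
lemma aux_exists_solution
    {D : ℝ} (hD : 0 < D) {G : ℝ × ℝ × ℝ → ℝ} (hG : ContDiff ℝ 1 G)
    (hvanish : ∀ t x y : ℝ, D ≤ |y| → G (t, x, y) = 0)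
    (t₀ x₀ y₀ M : ℝ) (hDM : D ≤ M) (hy₀ : |y₀| ≤ M) (T : ℝ) (hT : 0 < T) :
    ∃ f : ℝ → ℝ × ℝ, f t₀ = (x₀, y₀) ∧
      (∀ t ∈ Icc (t₀ - T) (t₀ + T),
        HasDerivWithinAt f ((f t).2, G (t, (f t).1, (f t).2)) (Icc (t₀ - T) (t₀ + T)) t) ∧
      (∀ t ∈ Icc (t₀ - T) (t₀ + T), |(f t).2| ≤ M) := by
  have hM : 0 < M := hD.trans_le hDM
  -- bump functions
  set b₁ : ContDiffBump (0 : ℝ) := ⟨|t₀| + T + 1, |t₀| + T + 2, by positivity, by linarith⟩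
    with hb₁
  set b₂ : ContDiffBump (0 : ℝ) :=
    ⟨|x₀| + M * T + 1, |x₀| + M * T + 2, by positivity, by linarith⟩ with hb₂
  set Gn : ℝ × ℝ × ℝ → ℝ := fun p => b₁ p.1 * b₂ p.2.1 * G p with hGn
  have hGnC : ContDiff ℝ 1 Gn :=
    (((b₁.contDiff).comp contDiff_fst).mul
      ((b₂.contDiff).comp (contDiff_fst.comp contDiff_snd))).mul hG
  have hsupp : HasCompactSupport Gn := by
    apply HasCompactSupport.intro (K := (closedBall (0:ℝ) b₁.rOut) ×ˢ
      ((closedBall (0:ℝ) b₂.rOut) ×ˢ (Icc (-D) D)))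
      ((isCompact_closedBall _ _).prod ((isCompact_closedBall _ _).prod isCompact_Icc))
    intro p hp
    by_contra hne
    apply hp
    have h1 : b₁ p.1 ≠ 0 := fun h => hne (by rw [hGn]; simp [h])
    have h2 : b₂ p.2.1 ≠ 0 := fun h => hne (by rw [hGn]; simp [h])
    have h3 : G p ≠ 0 := fun h => hne (by rw [hGn]; simp [h])
    have hy : |p.2.2| ≤ D := by
      by_contra hy
      exact h3 (hvanish p.1 p.2.1 p.2.2 (le_of_lt (not_le.mp hy)))
    refine ⟨?_, ?_, ?_⟩
    · have := Function.mem_support.mpr h1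
      rw [b₁.support_eq] at this
      exact ball_subset_closedBall this
    · have := Function.mem_support.mpr h2
      rw [b₂.support_eq] at this
      exact ball_subset_closedBall this
    · exact abs_le.mp hy
  obtain ⟨Kg, hKg⟩ := ContDiff.lipschitzWith_of_hasCompactSupport hsupp hGnC one_ne_zero
  obtain ⟨Cg, hCg⟩ := hsupp.exists_bound_of_continuous hGnC.continuous
  have hCg0 : 0 ≤ Cg := (norm_nonneg _).trans (hCg 0)
  -- clamping function
  set clamp : ℝ → ℝ := fun y => max (-(M + 1)) (min y (M + 1)) with hclamp
  have hclampLip : ∀ y z : ℝ, |clamp y - clamp z| ≤ |y - z| := by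
    intro y z
    rw [hclamp]
    simp only [max_comm (-(M+1))]
    refine (abs_max_sub_max_le_abs _ _ _).trans ?_
    refine (abs_min_sub_min_le_max y (M+1) z (M+1)).trans ?_
    simp
  have hclampbd : ∀ y : ℝ, |clamp y| ≤ M + 1 := by
    intro y
    rw [abs_le, hclamp]
    constructor
    · exact le_max_left _ _
    · exact max_le (by linarith) (min_le_right _ _)
  have hclampeq : ∀ y : ℝ, |y| ≤ M → clamp y = y := by
    intro y hy
    obtain ⟨h1, h2⟩ := abs_le.mp hy
    rw [hclamp]
    dsimp only
    rw [min_eq_left (by linarith), max_eq_right (by linarith)]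
  set vn : ℝ → ℝ × ℝ → ℝ × ℝ := fun t p => (clamp p.2, Gn (t, p.1, p.2)) with hvn
  set C : ℝ := max (M + 1) Cg with hC
  have hC0 : 0 < C := lt_of_lt_of_le (by linarith) (le_max_left _ _)
  set R : ℝ := C * T with hRdef
  have hR0 : 0 ≤ R := le_of_lt (mul_pos hC0 hT)
  set L : ℝ≥0 := Kg + 1 with hL
  have hlip : ∀ t, LipschitzWith L (vn t) := by
    intro t
    apply LipschitzWith.of_dist_le_mul
    intro p q
    have hd0 : (0:ℝ) ≤ dist p q := dist_nonneg
    have hL1 : (1:ℝ) ≤ (L : ℝ) := by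
      rw [hL]; push_cast; linarith [(Kg : ℝ≥0).coe_nonneg]
    have hLK : (Kg : ℝ) ≤ (L : ℝ) := by
      rw [hL]; push_cast; linarith
    have h1 : dist (clamp p.2) (clamp q.2) ≤ dist p q := by
      rw [Real.dist_eq]
      refine (hclampLip _ _).trans ?_
      rw [← Real.dist_eq]
      rw [Prod.dist_eq]
      exact le_max_right _ _
    have hdd : dist ((t, p.1, p.2) : ℝ × ℝ × ℝ) ((t, q.1, q.2) : ℝ × ℝ × ℝ) = dist p q := by
      rw [Prod.dist_eq, dist_self]
      exact max_eq_right dist_nonneg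
    have h2 : dist (Gn (t, p.1, p.2)) (Gn (t, q.1, q.2)) ≤ (Kg : ℝ) * dist p q := by
      have := hKg.dist_le_mul ((t, p.1, p.2) : ℝ × ℝ × ℝ) ((t, q.1, q.2) : ℝ × ℝ × ℝ)
      rwa [hdd] at this
    rw [hvn]
    dsimp only
    rw [Prod.dist_eq]
    apply max_le
    · exact h1.trans (le_mul_of_one_le_left hd0 hL1)
    · exact h2.trans (mul_le_mul_of_nonneg_right hLK hd0)
  have hnorm : ∀ t (p : ℝ × ℝ), ‖vn t p‖ ≤ C := by
    intro t p
    rw [hvn]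
    dsimp only
    rw [Prod.norm_def]
    apply max_le
    · rw [Real.norm_eq_abs]
      exact (hclampbd _).trans (le_max_left _ _)
    · exact (hCg _).trans (le_max_right _ _)
  have hPL : IsPicardLindelof vn (tmin := t₀ - T) (tmax := t₀ + T)
      ⟨t₀, by constructor <;> linarith⟩ ((x₀, y₀) : ℝ × ℝ) ⟨R, hR0⟩ 0 ⟨C, hC0.le⟩ L := by
    constructor
    · exact fun t _ => (hlip t).lipschitzOnWith
    · intro x _
      apply Continuous.continuousOn
      rw [hvn]
      exact continuous_const.prodMk
        (hGnC.continuous.comp (continuous_id.prodMk continuous_const))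
    · exact fun t _ x _ => hnorm t x
    · have h1 : t₀ + T - t₀ = T := by ring
      have h2 : t₀ - (t₀ - T) = T := by ring
      simp only [NNReal.coe_mk, NNReal.coe_zero, sub_zero]
      rw [h1, h2, max_self]
      exact le_rfl
  obtain ⟨f, hf0', hfd⟩ := hPL.exists_eq_forall_mem_Icc_hasDerivWithinAt₀
  have hf0 : f t₀ = (x₀, y₀) := hf0'
  set J : Set ℝ := Icc (t₀ - T) (t₀ + T) with hJ
  set X : ℝ → ℝ := fun t => (f t).1 with hX
  set Y : ℝ → ℝ := fun t => (f t).2 with hY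
  have ht₀J : t₀ ∈ J := ⟨by linarith, by linarith⟩
  have hYd : ∀ t ∈ J, HasDerivWithinAt Y (Gn (t, X t, Y t)) J t := by
    intro t ht
    exact (ContinuousLinearMap.snd ℝ ℝ ℝ).hasFDerivAt.comp_hasDerivWithinAt t (hfd t ht)
  have hXd : ∀ t ∈ J, HasDerivWithinAt X (clamp (Y t)) J t := by
    intro t ht
    exact (ContinuousLinearMap.fst ℝ ℝ ℝ).hasFDerivAt.comp_hasDerivWithinAt t (hfd t ht)
  have hvanY : ∀ t ∈ J, D ≤ |Y t| → Gn (t, X t, Y t) = 0 := by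
    intro t _ h
    rw [hGn]
    dsimp only
    rw [hvanish t (X t) (Y t) h, mul_zero]
  have hY0 : |Y t₀| ≤ M := by
    rw [hY]
    dsimp only
    rw [hf0]
    exact hy₀
  have hsubR : Icc t₀ (t₀ + T) ⊆ J := Icc_subset_Icc (by linarith) le_rfl
  have hsubL : Icc (t₀ - T) t₀ ⊆ J := Icc_subset_Icc le_rfl (by linarith)
  have hbR : ∀ t ∈ Icc t₀ (t₀ + T), |Y t| ≤ M :=
    aux_vel_bound_right hDM (fun t ht => (hYd t (hsubR ht)).mono hsubR)
      (fun t ht h => hvanY t (hsubR ht) h) hY0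
  have hbL : ∀ t ∈ Icc (t₀ - T) t₀, |Y t| ≤ M :=
    aux_vel_bound_left hDM (fun t ht => (hYd t (hsubL ht)).mono hsubL)
      (fun t ht h => hvanY t (hsubL ht) h) hY0
  have hbY : ∀ t ∈ J, |Y t| ≤ M := by
    intro t ht
    rcases le_total t t₀ with h | h
    · exact hbL t ⟨ht.1, h⟩
    · exact hbR t ⟨h, ht.2⟩
  have hclampY : ∀ t ∈ J, clamp (Y t) = Y t := fun t ht => hclampeq _ (hbY t ht)
  have hXbd : ∀ t ∈ J, |X t - x₀| ≤ M * T := by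
    intro t ht
    have hmvt := Convex.norm_image_sub_le_of_norm_hasDerivWithin_le
      (f := X) (f' := fun t => clamp (Y t)) (C := M) hXd
      (fun s hs => by
        show ‖clamp (Y s)‖ ≤ M
        rw [Real.norm_eq_abs, hclampY s hs]
        exact hbY s hs)
      (convex_Icc _ _) ht₀J ht
    have hXt₀ : X t₀ = x₀ := by rw [hX]; dsimp only; rw [hf0]
    rw [hXt₀] at hmvt
    refine hmvt.trans ?_
    apply mul_le_mul_of_nonneg_left _ hM.le
    rw [Real.norm_eq_abs, abs_le]
    constructor <;> [linarith [ht.1]; linarith [ht.2]]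
  have hb₁one : ∀ t ∈ J, b₁ t = 1 := by
    intro t ht
    apply b₁.one_of_mem_closedBall
    rw [mem_closedBall, Real.dist_eq, sub_zero]
    show |t| ≤ |t₀| + T + 1
    have h1 : |t - t₀| ≤ T := abs_le.mpr ⟨by linarith [ht.1], by linarith [ht.2]⟩
    calc |t| = |t₀ + (t - t₀)| := by ring_nf
      _ ≤ |t₀| + |t - t₀| := abs_add_le _ _
      _ ≤ |t₀| + T + 1 := by linarith
  have hb₂one : ∀ t ∈ J, b₂ (X t) = 1 := by
    intro t ht
    apply b₂.one_of_mem_closedBall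
    rw [mem_closedBall, Real.dist_eq, sub_zero]
    show |X t| ≤ |x₀| + M * T + 1
    have h1 := hXbd t ht
    calc |X t| = |x₀ + (X t - x₀)| := by ring_nf
      _ ≤ |x₀| + |X t - x₀| := abs_add_le _ _
      _ ≤ |x₀| + M * T + 1 := by linarith
  refine ⟨f, hf0, ?_, hbY⟩
  intro t ht
  have hder := hfd t ht
  have heq : vn t (f t) = ((f t).2, G (t, (f t).1, (f t).2)) := by
    rw [hvn]
    dsimp only
    have e1 : clamp (f t).2 = (f t).2 := hclampY t ht
    have e2 : Gn (t, (f t).1, (f t).2) = G (t, (f t).1, (f t).2) := by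
      rw [hGn]
      dsimp only
      have e3 := hb₁one t ht
      have e4 : b₂ (f t).1 = 1 := hb₂one t ht
      rw [e3, e4]
      ring
    rw [e1, e2]
  rw [heq] at hder
  exact hder

/-- Global existence for `θ″ = G(t, θ, θ′)` when `G` vanishes for large velocity:
every (local, hence every maximal) solution extends to a solution defined on all
of `ℝ`, with the velocity bound `|θ′(t)| ≤ max D |y₀|`. -/
theorem global_existence_of_euler_lagrange_flow
    (D : ℝ) (hD : 0 < D)
    (G : ℝ × ℝ × ℝ → ℝ) (hG : ContDiff ℝ 1 G)
    (hvanish : ∀ t x y : ℝ, D ≤ |y| → G (t, x, y) = 0)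
    (t₀ x₀ y₀ : ℝ)
    (I : Set ℝ) (hIopen : IsOpen I) (hIconn : I.OrdConnected) (ht₀ : t₀ ∈ I)
    (θ θ' : ℝ → ℝ)
    (hθ : ∀ t ∈ I, HasDerivAt θ (θ' t) t)
    (hθ' : ∀ t ∈ I, HasDerivAt θ' (G (t, θ t, θ' t)) t)
    (hinit : θ t₀ = x₀) (hinit' : θ' t₀ = y₀) :
    ∃ Θ Θ' : ℝ → ℝ,
      (∀ t, HasDerivAt Θ (Θ' t) t) ∧
      (∀ t, HasDerivAt Θ' (G (t, Θ t, Θ' t)) t) ∧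
      (∀ t ∈ I, Θ t = θ t ∧ Θ' t = θ' t) ∧
      (∀ t, |Θ' t| ≤ max D |y₀|) := by
  set M : ℝ := max D |y₀| with hM
  have hDM : D ≤ M := le_max_left _ _
  have hy0M : |y₀| ≤ M := le_max_right _ _
  set F : ℝ × ℝ × ℝ → ℝ × ℝ := fun p => (p.2.2, G p) with hF
  have hFC : ContDiff ℝ 1 F := (contDiff_snd.comp contDiff_snd).prodMk hG
  have hsol := fun n : ℕ =>
    aux_exists_solution hD hG hvanish t₀ x₀ y₀ M hDM hy0M ((n : ℝ) + 1) (by positivity)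
  choose f hf0 hfd hfb using hsol
  set J : ℕ → Set ℝ := fun n => Icc (t₀ - ((n : ℝ) + 1)) (t₀ + ((n : ℝ) + 1)) with hJ
  have hfc : ∀ n, ContinuousOn (f n) (J n) := fun n s hs => (hfd n s hs).continuousWithinAt
  have hfD : ∀ n : ℕ, ∀ t ∈ Ioo (t₀ - ((n : ℝ) + 1)) (t₀ + ((n : ℝ) + 1)),
      HasDerivAt (f n) (F (t, f n t)) t := by
    intro n t ht
    exact (hfd n t (Ioo_subset_Icc_self ht)).hasDerivAt (Icc_mem_nhds ht.1 ht.2)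
  have hmemJ : ∀ (n : ℕ) (t : ℝ), |t - t₀| ≤ (n : ℝ) + 1 → t ∈ J n := by
    intro n t ht
    obtain ⟨h1, h2⟩ := abs_le.mp ht
    exact ⟨by linarith, by linarith⟩
  have ht₀J : ∀ n, t₀ ∈ J n := fun n => hmemJ n t₀ (by simp; positivity)
  have hagree : ∀ m n : ℕ, m ≤ n → ∀ t ∈ J m, f m t = f n t := by
    intro m n hmn t ht
    have hmn' : (m : ℝ) ≤ (n : ℝ) := Nat.cast_le.mpr hmn
    have hsub : J m ⊆ J n := Icc_subset_Icc (by linarith) (by linarith)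
    have hIooIcc : Ioo (t₀ - ((m : ℝ) + 1)) (t₀ + ((m : ℝ) + 1)) ⊆ J m := Ioo_subset_Icc_self
    refine aux_uniq hFC (s₀ := t₀) ⟨by linarith, by linarith⟩ (hfc m)
      (fun s hs => hfD m s hs) ((hfc n).mono hsub)
      (fun s hs => hfD n s ⟨by linarith [hs.1], by linarith [hs.2]⟩) ?_ ht
    rw [hf0 m, hf0 n]
  set g : ℝ → ℝ × ℝ := fun t => f ⌈|t - t₀|⌉₊ t with hg
  have htJ : ∀ t : ℝ, t ∈ J ⌈|t - t₀|⌉₊ := fun t =>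
    hmemJ _ t ((Nat.le_ceil _).trans (by linarith))
  have hgeq : ∀ (n : ℕ) (t : ℝ), t ∈ J n → g t = f n t := by
    intro n t ht
    rw [hg]
    dsimp only
    rcases le_total ⌈|t - t₀|⌉₊ n with h | h
    · exact hagree _ n h t (htJ t)
    · exact (hagree n _ h t ht).symm
  have hgD : ∀ t, HasDerivAt g (F (t, g t)) t := by
    intro t
    set n : ℕ := ⌈|t - t₀|⌉₊ with hn
    have htIoo : t ∈ Ioo (t₀ - ((n : ℝ) + 1)) (t₀ + ((n : ℝ) + 1)) := by
      have h1 : |t - t₀| ≤ (n : ℝ) := Nat.le_ceil _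
      obtain ⟨h2, h3⟩ := abs_le.mp h1
      exact ⟨by linarith, by linarith⟩
    have hev : g =ᶠ[𝓝 t] f n := by
      have hmem : t ∈ ball t₀ ((n : ℝ) + 1) := by
        rw [mem_ball, Real.dist_eq]
        exact lt_of_le_of_lt (Nat.le_ceil _) (by linarith)
      filter_upwards [isOpen_ball.mem_nhds hmem] with s hs
      rw [mem_ball, Real.dist_eq] at hs
      exact hgeq n s (hmemJ n s hs.le)
    have hd := (hfD n t htIoo).congr_of_eventuallyEq hev
    rwa [← hgeq n t (htJ t)] at hd
  have hg0 : g t₀ = (x₀, y₀) := by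
    rw [hgeq 0 t₀ (ht₀J 0), hf0 0]
  refine ⟨fun t => (g t).1, fun t => (g t).2, ?_, ?_, ?_, ?_⟩
  · intro t
    exact (ContinuousLinearMap.fst ℝ ℝ ℝ).hasFDerivAt.comp_hasDerivAt t (hgD t)
  · intro t
    exact (ContinuousLinearMap.snd ℝ ℝ ℝ).hasFDerivAt.comp_hasDerivAt t (hgD t)
  · intro t htI
    set p : ℝ → ℝ × ℝ := fun s => (θ s, θ' s) with hp
    set a : ℝ := min t t₀ with ha
    set b : ℝ := max t t₀ with hb
    have haI : a ∈ I := by rcases le_total t t₀ with h | h <;>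
      simp [ha, min_eq_left, min_eq_right, h, htI, ht₀]
    have hbI : b ∈ I := by rcases le_total t t₀ with h | h <;>
      simp [hb, max_eq_left, max_eq_right, h, htI, ht₀]
    obtain ⟨εa, hεa0, hεa⟩ := Metric.isOpen_iff.mp hIopen a haI
    obtain ⟨εb, hεb0, hεb⟩ := Metric.isOpen_iff.mp hIopen b hbI
    set δ : ℝ := min εa εb with hδ
    have hδ0 : 0 < δ := lt_min hεa0 hεb0
    have ha'I : a - δ / 2 ∈ I := by
      apply hεa
      rw [mem_ball, Real.dist_eq]
      rw [abs_of_nonpos (by linarith)]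
      have : δ ≤ εa := min_le_left _ _
      linarith
    have hb'I : b + δ / 2 ∈ I := by
      apply hεb
      rw [mem_ball, Real.dist_eq]
      rw [abs_of_nonneg (by linarith)]
      have : δ ≤ εb := min_le_right _ _
      linarith
    have hIcc : Icc (a - δ / 2) (b + δ / 2) ⊆ I := hIconn.out ha'I hb'I
    have hat : a ≤ t := min_le_left _ _
    have htb : t ≤ b := le_max_left _ _
    have hat₀ : a ≤ t₀ := min_le_right _ _
    have ht₀b : t₀ ≤ b := le_max_right _ _
    have ht₀Ioo : t₀ ∈ Ioo (a - δ / 2) (b + δ / 2) := ⟨by linarith, by linarith⟩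
    have hgCont : ContinuousOn g (Icc (a - δ / 2) (b + δ / 2)) :=
      fun s _ => (hgD s).continuousAt.continuousWithinAt
    have hpCont : ContinuousOn p (Icc (a - δ / 2) (b + δ / 2)) := fun s hs =>
      (((hθ s (hIcc hs)).continuousAt).prodMk ((hθ' s (hIcc hs)).continuousAt)).continuousWithinAt
    have hpD : ∀ s ∈ Ioo (a - δ / 2) (b + δ / 2), HasDerivAt p (F (s, p s)) s := by
      intro s hs
      have hsI : s ∈ I := hIcc (Ioo_subset_Icc_self hs)
      exact (hθ s hsI).prodMk (hθ' s hsI)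
    have heq0 : g t₀ = p t₀ := by
      rw [hg0, hp]
      dsimp only
      rw [hinit, hinit']
    have huni := aux_uniq hFC ht₀Ioo hgCont (fun s _ => hgD s) hpCont hpD heq0
    have hgt : g t = p t := huni ⟨by linarith, by linarith⟩
    exact ⟨congrArg Prod.fst hgt, congrArg Prod.snd hgt⟩
  · intro t
    exact hfb _ t (htJ t)
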